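/- Suppose n = 2^m − 1 for some integer m ≥ 0. Then the number of 321-avoiding permutations of [n] with exactly 0 descents equals 1, and for every k ≥ 1 the number of 321-avoiding permutations of [n] with exactly k descents is even. -/

import Mathlib

open Finset MvPolynomial

/-- `σ` avoids the pattern 321. -/
def Avoids321 {n : ℕ} (σ : Equiv.Perm (Fin n)) : Prop :=
  ¬ ∃ i j k : Fin n, i < j ∧ j < k ∧ σ k < σ j ∧ σ j < σ i

instance {n : ℕ} : DecidablePred (Avoids321 (n := n)) := fun σ => by
  unfold Avoids321; infer_instance

/-- The set of 321-avoiding permutations of `{1,…,n}` (modelled on `Fin n`). -/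
def Av (n : ℕ) : Finset (Equiv.Perm (Fin n)) := univ.filter Avoids321

/-- The number of inversions of a permutation. -/
def invPerm {n : ℕ} (σ : Equiv.Perm (Fin n)) : ℕ :=
  (univ.filter (fun p : Fin n × Fin n => p.1 < p.2 ∧ σ p.2 < σ p.1)).card

/-- Position `i` is a left-right maximum of `σ`. -/
def IsLRMax {n : ℕ} (σ : Equiv.Perm (Fin n)) (i : Fin n) : Prop :=
  ∀ j, j ≤ i → σ j ≤ σ i

instance {n : ℕ} (σ : Equiv.Perm (Fin n)) : DecidablePred (IsLRMax σ) := fun i => by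
  unfold IsLRMax; infer_instance

/-- The number of left-right maxima of `σ`. -/
def lrm {n : ℕ} (σ : Equiv.Perm (Fin n)) : ℕ := (univ.filter (IsLRMax σ)).card

/-- The number of fixed points of `σ`. -/
def fixPerm {n : ℕ} (σ : Equiv.Perm (Fin n)) : ℕ := (univ.filter (fun i => σ i = i)).card

/-- The number of excedances of `σ`. -/
def excPerm {n : ℕ} (σ : Equiv.Perm (Fin n)) : ℕ := (univ.filter (fun i => i < σ i)).card

/-- The descent set of `σ`: `i` is in it iff `σ` descends from position `i+1` to `i+2`
(0-based index `i` corresponds to the 1-based descent position `i+1`). -/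
def DesPerm {n : ℕ} (σ : Equiv.Perm (Fin n)) : Finset (Fin n) :=
  univ.filter (fun i => ∃ h : i.val + 1 < n, σ ⟨i.val + 1, h⟩ < σ i)

/-- The number of descents of `σ`. -/
def desPerm {n : ℕ} (σ : Equiv.Perm (Fin n)) : ℕ := (DesPerm σ).card

/-- The major index of `σ` (descents at 1-based positions). -/
def majPerm {n : ℕ} (σ : Equiv.Perm (Fin n)) : ℕ := ∑ i ∈ DesPerm σ, (i.val + 1)

/-- Number of `true` letters among the first `i` letters of the word `P`. -/
def UpCt {m : ℕ} (P : Fin m → Bool) (i : ℕ) : ℕ :=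
  (univ.filter (fun j : Fin m => j.val < i ∧ P j = true)).card

/-- Number of `false` letters among the first `i` letters of the word `P`. -/
def DownCt {m : ℕ} (P : Fin m → Bool) (i : ℕ) : ℕ :=
  (univ.filter (fun j : Fin m => j.val < i ∧ P j = false)).card

/-- A word (with `true` = U, `false` = D) is a Dyck word: every prefix has at least as
many U's as D's, and the total numbers of U's and D's agree. -/
def IsDyck {m : ℕ} (P : Fin m → Bool) : Prop :=
  (∀ i, i ≤ m → DownCt P i ≤ UpCt P i) ∧ UpCt P m = DownCt P m

instance {m : ℕ} : DecidablePred (IsDyck (m := m)) := fun P => by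
  unfold IsDyck; infer_instance

/-- The Dyck paths of semilength `n`, as words of length `2n`. -/
def DyckSet (n : ℕ) : Finset (Fin (2 * n) → Bool) := univ.filter IsDyck

/-- Valleys (descents of the word, i.e. factors `DU`), recorded by the 0-based
index of the `D` step. -/
def Valleys {m : ℕ} (P : Fin m → Bool) : Finset (Fin m) :=
  univ.filter (fun j => P j = false ∧ ∃ h : j.val + 1 < m, P ⟨j.val + 1, h⟩ = true)

/-- `des` of a path: the number of valleys. -/
def desPath {m : ℕ} (P : Fin m → Bool) : ℕ := (Valleys P).card

/-- `maj` of a path: the sum of the (1-based) positions of the descents. -/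
def majPath {m : ℕ} (P : Fin m → Bool) : ℕ := ∑ j ∈ Valleys P, (j.val + 1)

/-- `α(P) = Σ_{i ∈ Des P} |p_i(P)|_U`. -/
def alphaPath {m : ℕ} (P : Fin m → Bool) : ℕ := ∑ j ∈ Valleys P, UpCt P (j.val + 1)

/-- `β(P) = Σ_{i ∈ Des P} |p_i(P)|_D`. -/
def betaPath {m : ℕ} (P : Fin m → Bool) : ℕ := ∑ j ∈ Valleys P, DownCt P (j.val + 1)

/-- Peaks (factors `UD`), recorded by the 0-based index of the `U` step. -/
def Peaks {m : ℕ} (P : Fin m → Bool) : Finset (Fin m) :=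
  univ.filter (fun j => P j = true ∧ ∃ h : j.val + 1 < m, P ⟨j.val + 1, h⟩ = false)

/-- The number of peaks of `P`. -/
def npea {m : ℕ} (P : Fin m → Bool) : ℕ := (Peaks P).card

/-- `spea P = Σ_p (HT(p) - 1)` over peaks `p`, where `HT` is the height of a peak. -/
def spea {m : ℕ} (P : Fin m → Bool) : ℕ :=
  ∑ j ∈ Peaks P, (UpCt P (j.val + 1) - DownCt P (j.val + 1) - 1)

/-- The height of the path after `i` steps. -/
def htAt {m : ℕ} (P : Fin m → Bool) (i : ℕ) : ℤ := (UpCt P i : ℤ) - (DownCt P i : ℤ)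

/-- The start of the tunnel of the valley whose lowest lattice point comes after
`k` steps: the largest `m < k` at which the path has the same height. -/
def tunnelStart {m : ℕ} (P : Fin m → Bool) (k : ℕ) : ℕ :=
  ((Finset.range k).filter (fun j => htAt P j = htAt P k)).sup id

/-- `stun P`: the sum over all valleys of the semilengths of their tunnels. -/
def stun {m : ℕ} (P : Fin m → Bool) : ℕ :=
  ∑ j ∈ Valleys P, (j.val + 1 - tunnelStart P (j.val + 1)) / 2

/-- A parallelogram polyomino: a pair `(U,V)` of `N/E`-paths (`true` = N, `false` = E)
of the same length, with the same endpoints, such that `U` stays strictly above `V`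
except at the endpoints (i.e. every proper nonempty prefix of `U` contains strictly
more `N`-steps than the corresponding prefix of `V`).  As noted by Fürlinger and
Hofbauer, the lower path begins with an `E`-step and the upper path ends with an
`E`-step; this is automatic for `m ≥ 2` and fixes the convention in the degenerate
case `m = 1`. -/
def IsParaPoly {m : ℕ} (U V : Fin m → Bool) : Prop :=
  UpCt U m = UpCt V m ∧ (∀ i, i < m → 1 ≤ i → UpCt V i < UpCt U i) ∧
    UpCt V 1 = 0 ∧ UpCt U m = UpCt U (m - 1)

instance {m : ℕ} (U V : Fin m → Bool) : Decidable (IsParaPoly U V) := by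
  unfold IsParaPoly; infer_instance

/-- The parallelogram polyominoes of size `n`. -/
def ParaSet (n : ℕ) : Finset ((Fin n → Bool) × (Fin n → Bool)) :=
  univ.filter (fun UV => IsParaPoly UV.1 UV.2)

/-- A shortened polyomino: a pair `(P,Q)` of `N/E`-paths of the same length with the
same endpoints such that `P` stays weakly above `Q` and the two paths share no
`N`-steps (an `N`-step is shared exactly when it occurs at the same index with equal
prefix `N`-counts). -/
def IsShortPoly {m : ℕ} (P Q : Fin m → Bool) : Prop :=
  UpCt P m = UpCt Q m ∧ (∀ i, i ≤ m → UpCt Q i ≤ UpCt P i) ∧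
    ∀ j : Fin m, UpCt P j.val = UpCt Q j.val → ¬(P j = true ∧ Q j = true)

instance {m : ℕ} (P Q : Fin m → Bool) : Decidable (IsShortPoly P Q) := by
  unfold IsShortPoly; infer_instance

/-- The shortened polyominoes of size `n`. -/
def ShortSet (n : ℕ) : Finset ((Fin n → Bool) × (Fin n → Bool)) :=
  univ.filter (fun PQ => IsShortPoly PQ.1 PQ.2)

/-- The sum, over the `E`-steps of a path, of their heights (`N`-count before the step). -/
def eSum {m : ℕ} (W : Fin m → Bool) : ℕ :=
  ∑ j ∈ univ.filter (fun j : Fin m => W j = false), UpCt W j.val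

/-- The area between the upper path `U` and the lower path `V`. -/
def areaPoly {m : ℕ} (U V : Fin m → Bool) : ℕ := eSum U - eSum V

/-- The number of columns spanned: the number of `E`-steps of the path. -/
def colPoly {m : ℕ} (W : Fin m → Bool) : ℕ := (univ.filter (fun j : Fin m => W j = false)).card

/-- `I_n(q,t) = Σ_{σ ∈ Av_n(321)} q^{inv σ} t^{lrm σ}`, with `q = X 0`, `t = X 1`. -/
noncomputable def IPoly (n : ℕ) : MvPolynomial (Fin 2) ℤ :=
  ∑ σ ∈ Av n, X 0 ^ invPerm σ * X 1 ^ lrm σ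

/-- `M_n(q,t) = Σ_{σ ∈ Av_n(321)} q^{maj σ} t^{des σ}`, with `q = X 0`, `t = X 1`. -/
noncomputable def MPoly (n : ℕ) : MvPolynomial (Fin 2) ℤ :=
  ∑ σ ∈ Av n, X 0 ^ majPerm σ * X 1 ^ desPerm σ

/-- `I_n(q,t,x) = Σ_{σ ∈ Av_n(321)} q^{inv σ} t^{lrm σ} x^{fix σ}`,
with `q = X 0`, `t = X 1`, `x = X 2`. -/
noncomputable def IPoly3 (n : ℕ) : MvPolynomial (Fin 3) ℤ :=
  ∑ σ ∈ Av n, X 0 ^ invPerm σ * X 1 ^ lrm σ * X 2 ^ fixPerm σ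

/-- `C_n(a,b;t) = Σ_{P ∈ D_n} a^{α(P)} b^{β(P)} t^{des P}`,
with `a = X 0`, `b = X 1`, `t = X 2`. -/
noncomputable def CPoly (n : ℕ) : MvPolynomial (Fin 3) ℤ :=
  ∑ P ∈ DyckSet n, X 0 ^ alphaPath P * X 1 ^ betaPath P * X 2 ^ desPath P

/-- `P_n(q,t) = Σ_{(U,V) ∈ 𝒫_n} q^{area(U,V)} t^{col(U,V)}`, with `q = X 0`, `t = X 1`. -/
noncomputable def PPoly (n : ℕ) : MvPolynomial (Fin 2) ℤ :=
  ∑ UV ∈ ParaSet n, X 0 ^ areaPoly UV.1 UV.2 * X 1 ^ colPoly UV.1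

/-- `I_n(-1,t) = Σ_{σ ∈ Av_n(321)} (-1)^{inv σ} t^{lrm σ} ∈ ℤ[t]`. -/
noncomputable def ISign (n : ℕ) : Polynomial ℤ :=
  ∑ σ ∈ Av n, Polynomial.C ((-1 : ℤ) ^ invPerm σ) * Polynomial.X ^ lrm σ

/-- Substitution `t ↦ q^k t` for polynomials in `q = X 0`, `t = X 1`. -/
noncomputable def subT (k : ℕ) (f : MvPolynomial (Fin 2) ℤ) : MvPolynomial (Fin 2) ℤ :=
  bind₁ (fun i : Fin 2 => if i = 0 then X 0 else X 0 ^ k * X 1) f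

/-- Substitution `t ↦ u` (third variable) for polynomials in `a = X 0`, `b = X 1`, `t = X 2`. -/
noncomputable def subT3 (u : MvPolynomial (Fin 3) ℤ) (f : MvPolynomial (Fin 3) ℤ) :
    MvPolynomial (Fin 3) ℤ :=
  bind₁ (fun i : Fin 3 => if i = 2 then u else X i) f

/-- Substitution `x ↦ 1` (third variable) for polynomials in `q = X 0`, `t = X 1`, `x = X 2`. -/
noncomputable def subX1 (f : MvPolynomial (Fin 3) ℤ) : MvPolynomial (Fin 3) ℤ :=
  bind₁ (fun i : Fin 3 => if i = 2 then 1 else X i) f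

/-- `val σ`: indicator vector of left-right maximum values (`val σ i = 1` iff the value `i`
occurs at a left-right maximum position of `σ`). -/
def valVec {n : ℕ} (σ : Equiv.Perm (Fin n)) (i : Fin n) : ℕ :=
  if ∃ j, IsLRMax σ j ∧ σ j = i then 1 else 0

/-- `pos σ`: indicator vector of left-right maximum positions. -/
def posVec {n : ℕ} (σ : Equiv.Perm (Fin n)) (i : Fin n) : ℕ :=
  if IsLRMax σ i then 1 else 0
namespace Stmt13

open Finset

/-! ### Parity via involutions -/

lemma invol_parity {α : Type*} [DecidableEq α] (f : α → α) :
    ∀ (s : Finset α), (∀ x ∈ s, f x ∈ s) → (∀ x ∈ s, f (f x) = x) →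
      s.card % 2 = (s.filter fun x => f x = x).card % 2 := by
  intro s
  induction s using Finset.strongInduction with
  | _ s ih =>
    intro hmap hinv
    by_cases hall : ∀ x ∈ s, f x = x
    · rw [Finset.filter_true_of_mem hall]
    · push_neg at hall
      obtain ⟨x, hx, hfx⟩ := hall
      have hfxs : f x ∈ s := hmap x hx
      have hffx : f (f x) = x := hinv x hx
      have hpair : ({x, f x} : Finset α) ⊆ s := by
        intro y hy
        rcases Finset.mem_insert.mp hy with h | h
        · rwa [h]
        · rw [Finset.mem_singleton.mp h]; exact hfxs
      have hsub : s \ {x, f x} ⊂ s :=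
        Finset.sdiff_ssubset hpair ⟨x, by simp⟩
      set s' := s \ {x, f x} with hs'
      have hmem' : ∀ y, y ∈ s' ↔ y ∈ s ∧ y ≠ x ∧ y ≠ f x := by
        intro y
        simp [hs', Finset.mem_sdiff, and_assoc, not_or]
      have hmap' : ∀ y ∈ s', f y ∈ s' := by
        intro y hy
        obtain ⟨hys, hyx, hyfx⟩ := (hmem' y).mp hy
        refine (hmem' (f y)).mpr ⟨hmap y hys, ?_, ?_⟩
        · intro h
          exact hyfx (by rw [← hinv y hys, h])
        · intro h
          exact hyx (by rw [← hinv y hys, h, hffx])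
      have hinv' : ∀ y ∈ s', f (f y) = y := fun y hy => hinv y ((hmem' y).mp hy).1
      have hcard : s.card = s'.card + 2 := by
        have h1 : s'.card = s.card - ({x, f x} : Finset α).card :=
          Finset.card_sdiff_of_subset hpair
        have h2 : ({x, f x} : Finset α).card = 2 := Finset.card_pair (Ne.symm hfx)
        have h3 : ({x, f x} : Finset α).card ≤ s.card := Finset.card_le_card hpair
        omega
      have hfilter : s.filter (fun y => f y = y) = s'.filter (fun y => f y = y) := by
        ext y
        simp only [Finset.mem_filter, hmem' y]
        constructor
        · rintro ⟨hys, hfy⟩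
          refine ⟨⟨hys, ?_, ?_⟩, hfy⟩
          · rintro rfl; exact hfx hfy
          · rintro rfl; rw [hffx] at hfy; exact hfx hfy.symm
        · rintro ⟨⟨hys, _, _⟩, hfy⟩; exact ⟨hys, hfy⟩
      rw [hfilter, hcard, ← ih s' hsub hmap' hinv']
      omega

/-! ### Descents as a set of naturals -/

/-- `σ` as a function `ℕ → ℕ` (junk value `0` out of range). -/
def natForm {n : ℕ} (σ : Equiv.Perm (Fin n)) (i : ℕ) : ℕ :=
  if h : i < n then (σ ⟨i, h⟩).val else 0

lemma natForm_lt {n : ℕ} (σ : Equiv.Perm (Fin n)) {i : ℕ} (h : i < n) :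
    natForm σ i < n := by
  simp only [natForm, dif_pos h]
  exact (σ ⟨i, h⟩).is_lt

lemma natForm_apply {n : ℕ} (σ : Equiv.Perm (Fin n)) {i : ℕ} (h : i < n) :
    natForm σ i = (σ ⟨i, h⟩).val := dif_pos h

lemma natForm_inj {n : ℕ} (σ : Equiv.Perm (Fin n)) {i j : ℕ} (hi : i < n) (hj : j < n)
    (h : natForm σ i = natForm σ j) : i = j := by
  rw [natForm_apply σ hi, natForm_apply σ hj] at h
  have := σ.injective (Fin.ext h)
  simpa using congrArg Fin.val this

/-- The descent set of `σ` as a set of naturals. -/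
def natDes {n : ℕ} (σ : Equiv.Perm (Fin n)) : Finset ℕ :=
  (Finset.range (n - 1)).filter (fun d => natForm σ (d + 1) < natForm σ d)

lemma mem_natDes {n : ℕ} (σ : Equiv.Perm (Fin n)) (d : ℕ) :
    d ∈ natDes σ ↔ d + 1 < n ∧ natForm σ (d + 1) < natForm σ d := by
  simp only [natDes, Finset.mem_filter, Finset.mem_range]
  constructor <;> rintro ⟨h1, h2⟩ <;> exact ⟨by omega, h2⟩

lemma desPerm_eq_natDes {n : ℕ} (σ : Equiv.Perm (Fin n)) :
    desPerm σ = (natDes σ).card := by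
  unfold desPerm DesPerm
  apply Finset.card_bij (fun d _ => d.val)
  · intro d hd
    simp only [Finset.mem_filter, Finset.mem_univ, true_and] at hd
    obtain ⟨h, hlt⟩ := hd
    rw [mem_natDes]
    refine ⟨h, ?_⟩
    rw [natForm_apply σ h, natForm_apply σ d.is_lt]
    exact hlt
  · intro a ha b hb h
    exact Fin.ext h
  · intro b hb
    rw [mem_natDes] at hb
    obtain ⟨h, hlt⟩ := hb
    refine ⟨⟨b, by omega⟩, ?_, rfl⟩
    simp only [Finset.mem_filter, Finset.mem_univ, true_and]
    refine ⟨h, ?_⟩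
    rw [natForm_apply σ h, natForm_apply σ (by omega : b < n)] at hlt
    exact hlt

/-! ### Reverse-complement -/

/-- The reverse-complement of a permutation. -/
def rcPerm {n : ℕ} (σ : Equiv.Perm (Fin n)) : Equiv.Perm (Fin n) :=
  (Fin.revPerm.trans σ).trans Fin.revPerm

lemma rcPerm_apply {n : ℕ} (σ : Equiv.Perm (Fin n)) (i : Fin n) :
    rcPerm σ i = Fin.rev (σ (Fin.rev i)) := rfl

lemma rcPerm_rcPerm {n : ℕ} (σ : Equiv.Perm (Fin n)) : rcPerm (rcPerm σ) = σ := by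
  ext i
  simp [rcPerm_apply, Fin.rev_rev]

lemma avoids_rcPerm {n : ℕ} {σ : Equiv.Perm (Fin n)} (h : Avoids321 σ) :
    Avoids321 (rcPerm σ) := by
  rintro ⟨i, j, k, hij, hjk, h1, h2⟩
  rw [rcPerm_apply, rcPerm_apply, Fin.rev_lt_rev] at h1 h2
  exact h ⟨Fin.rev k, Fin.rev j, Fin.rev i, Fin.rev_lt_rev.mpr hjk, Fin.rev_lt_rev.mpr hij,
    h2, h1⟩

lemma mem_Av {n : ℕ} {σ : Equiv.Perm (Fin n)} : σ ∈ Av n ↔ Avoids321 σ := by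
  simp [Av]

lemma natForm_rcPerm {n : ℕ} (σ : Equiv.Perm (Fin n)) {d : ℕ} (h : d < n) :
    natForm (rcPerm σ) d = n - 1 - natForm σ (n - 1 - d) := by
  rw [natForm_apply _ h, natForm_apply σ (by omega : n - 1 - d < n)]
  rw [rcPerm_apply]
  have h1 : Fin.rev (⟨d, h⟩ : Fin n) = ⟨n - 1 - d, by omega⟩ := by
    apply Fin.ext
    rw [Fin.val_rev]
    show n - (d + 1) = n - 1 - d
    omega
  rw [h1, Fin.val_rev]
  show n - (_ + 1) = _
  omega

lemma desPerm_rcPerm {n : ℕ} (σ : Equiv.Perm (Fin n)) :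
    desPerm (rcPerm σ) = desPerm σ := by
  rw [desPerm_eq_natDes, desPerm_eq_natDes]
  have key : ∀ d, d ∈ natDes (rcPerm σ) ↔ n - 2 - d ∈ natDes σ ∧ d + 1 < n := by
    intro d
    rw [mem_natDes, mem_natDes]
    constructor
    · rintro ⟨hd, hlt⟩
      rw [natForm_rcPerm σ (by omega), natForm_rcPerm σ (by omega)] at hlt
      have e1 : natForm σ (n - 1 - d) < n := natForm_lt σ (by omega)
      have e2 : natForm σ (n - 1 - (d + 1)) < n := natForm_lt σ (by omega)
      have e3 : natForm σ (n - 2 - d) < n := natForm_lt σ (by omega)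
      have h3 : n - 2 - d + 1 = n - 1 - d := by omega
      refine ⟨⟨by omega, ?_⟩, hd⟩
      rw [h3]
      have h4 : n - 1 - (d + 1) = n - 2 - d := by omega
      rw [h4] at hlt
      omega
    · rintro ⟨⟨hd, hlt⟩, hdn⟩
      refine ⟨hdn, ?_⟩
      rw [natForm_rcPerm σ (by omega), natForm_rcPerm σ (by omega)]
      have e1 : natForm σ (n - 1 - d) < n := natForm_lt σ (by omega)
      have e2 : natForm σ (n - 1 - (d + 1)) < n := natForm_lt σ (by omega)
      have e3 : natForm σ (n - 2 - d) < n := natForm_lt σ (by omega)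
      have h3 : n - 2 - d + 1 = n - 1 - d := by omega
      have h4 : n - 1 - (d + 1) = n - 2 - d := by omega
      rw [h3] at hlt
      rw [h4]
      omega
  apply Finset.card_bij' (fun d _ => n - 2 - d) (fun d _ => n - 2 - d)
  · intro a ha
    exact ((key a).mp ha).1
  · intro a ha
    rw [key]
    have := (mem_natDes σ a).mp ha
    refine ⟨?_, by omega⟩
    have h5 : n - 2 - (n - 2 - a) = a := by omega
    rwa [h5]
  · intro a ha
    have := ((key a).mp ha).2
    omega
  · intro a ha
    have := (mem_natDes σ a).mp ha
    omega

/-! ### Zero descents -/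

lemma eq_one_of_desPerm_eq_zero {n : ℕ} {σ : Equiv.Perm (Fin n)} (h : desPerm σ = 0) :
    σ = 1 := by
  have hmono : StrictMono σ := by
    rcases n with _ | m
    · intro a b hab; exact absurd a.is_lt (by omega)
    · rw [Fin.strictMono_iff_lt_succ]
      intro i
      by_contra hlt
      have hne : σ i.castSucc ≠ σ i.succ := fun hc =>
        absurd (σ.injective hc) (by simp [Fin.ext_iff])
      have hgt : σ i.succ < σ i.castSucc := by
        rcases lt_trichotomy (σ i.castSucc) (σ i.succ) with h1 | h1 | h1
        · exact absurd h1 hlt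
        · exact absurd h1 hne
        · exact h1
      have : i.castSucc ∈ DesPerm σ := by
        simp only [DesPerm, Finset.mem_filter, Finset.mem_univ, true_and]
        refine ⟨by simp [Fin.is_lt], ?_⟩
        have : (⟨i.castSucc.val + 1, by simp [Fin.is_lt]⟩ : Fin (m + 1)) = i.succ := by
          simp [Fin.ext_iff]
        rw [this]
        exact hgt
      have : desPerm σ ≠ 0 := Finset.card_ne_zero_of_mem this
      exact this h
  have hinvmono : StrictMono (σ.symm : Fin n → Fin n) := by
    intro a b hab
    rcases lt_trichotomy (σ.symm a) (σ.symm b) with h1 | h1 | h1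
    · exact h1
    · exact absurd (congrArg σ h1) (by simp [hab.ne])
    · have := hmono h1
      simp only [Equiv.apply_symm_apply] at this
      exact absurd hab (not_lt.mpr this.le)
  have : WellFoundedLT (Fin n) := Finite.to_wellFoundedLT
  ext i
  have h1 : i ≤ σ i := hmono.le_apply
  have h2 : i ≤ σ.symm i := hinvmono.le_apply
  have h3 : σ i ≤ σ (σ.symm i) := hmono.monotone h2
  simp only [Equiv.apply_symm_apply] at h3
  exact le_antisymm h3 h1

lemma one_mem_Av (n : ℕ) : (1 : Equiv.Perm (Fin n)) ∈ Av n := by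
  rw [mem_Av]
  rintro ⟨i, j, k, hij, hjk, h1, h2⟩
  simp only [Equiv.Perm.one_apply] at h1 h2
  exact absurd (h1.trans h2) (by omega)

lemma desPerm_one (n : ℕ) : desPerm (1 : Equiv.Perm (Fin n)) = 0 := by
  unfold desPerm
  rw [Finset.card_eq_zero]
  rw [Finset.eq_empty_iff_forall_notMem]
  intro i hi
  rw [DesPerm, Finset.mem_filter] at hi
  simp only [DesPerm, Finset.mem_filter, Finset.mem_univ, true_and,
    Equiv.Perm.one_apply] at hi
  obtain ⟨h, hlt⟩ := hi
  rw [Fin.lt_def] at hlt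
  simp at hlt

lemma card_des_zero (n : ℕ) :
    ((Av n).filter (fun σ => desPerm σ = 0)).card = 1 := by
  have : (Av n).filter (fun σ => desPerm σ = 0) = {1} := by
    ext σ
    simp only [Finset.mem_filter, Finset.mem_singleton]
    constructor
    · rintro ⟨_, h⟩
      exact eq_one_of_desPerm_eq_zero h
    · rintro rfl
      exact ⟨one_mem_Av n, desPerm_one n⟩
  rw [this, Finset.card_singleton]

/-! ### Patterns via natForm -/

lemma not_avoids_of_natForm {n : ℕ} {σ : Equiv.Perm (Fin n)} (h : Avoids321 σ)
    {a b c : ℕ} (hab : a < b) (hbc : b < c) (hc : c < n)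
    (h1 : natForm σ c < natForm σ b) (h2 : natForm σ b < natForm σ a) : False := by
  have hb : b < n := hbc.trans hc
  have ha : a < n := hab.trans hb
  apply h
  refine ⟨⟨a, ha⟩, ⟨b, hb⟩, ⟨c, hc⟩, hab, hbc, ?_, ?_⟩
  · rw [natForm_apply σ hc, natForm_apply σ hb] at h1
    exact h1
  · rw [natForm_apply σ hb, natForm_apply σ ha] at h2
    exact h2

/-! ### Gluing -/

/-- The underlying function of the glued permutation. -/
def gfun (s : ℕ) (τ : Equiv.Perm (Fin s)) (i : ℕ) : ℕ :=
  if i < s then natForm τ i else if i = s then s else 2 * s - natForm τ (2 * s - i)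

lemma gfun_lo {s : ℕ} (τ : Equiv.Perm (Fin s)) {i : ℕ} (h : i < s) :
    gfun s τ i = natForm τ i := if_pos h

lemma gfun_mid {s : ℕ} (τ : Equiv.Perm (Fin s)) : gfun s τ s = s := by
  simp [gfun]

lemma gfun_hi {s : ℕ} (τ : Equiv.Perm (Fin s)) {i : ℕ} (h : s < i) :
    gfun s τ i = 2 * s - natForm τ (2 * s - i) := by
  rw [gfun, if_neg (by omega), if_neg (by omega)]

lemma gfun_lo_lt {s : ℕ} (τ : Equiv.Perm (Fin s)) {i : ℕ} (h : i < s) :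
    gfun s τ i < s := by
  rw [gfun_lo τ h]; exact natForm_lt τ h

lemma gfun_hi_gt {s : ℕ} (τ : Equiv.Perm (Fin s)) {i : ℕ} (h1 : s < i) (h2 : i < 2 * s + 1) :
    s < gfun s τ i := by
  rw [gfun_hi τ h1]
  have := natForm_lt τ (show 2 * s - i < s by omega)
  omega

lemma gfun_lt_n {s : ℕ} (τ : Equiv.Perm (Fin s)) {i : ℕ} (h : i < 2 * s + 1) :
    gfun s τ i < 2 * s + 1 := by
  rcases lt_trichotomy i s with hi | hi | hi
  · have := gfun_lo_lt τ hi; omega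
  · subst hi; rw [gfun_mid]; omega
  · rw [gfun_hi τ hi]; omega

lemma gfun_inj {s : ℕ} (τ : Equiv.Perm (Fin s)) {a b : ℕ}
    (ha : a < 2 * s + 1) (hb : b < 2 * s + 1) (h : gfun s τ a = gfun s τ b) : a = b := by
  rcases lt_trichotomy a s with ha' | ha' | ha' <;> rcases lt_trichotomy b s with hb' | hb' | hb'
  · rw [gfun_lo τ ha', gfun_lo τ hb'] at h
    exact natForm_inj τ (by omega) (by omega) h
  · subst hb'; rw [gfun_mid] at h; have := gfun_lo_lt τ ha'; omega
  · have := gfun_lo_lt τ ha'; have := gfun_hi_gt τ hb' hb; omega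
  · subst ha'; rw [gfun_mid] at h; have := gfun_lo_lt τ hb'; omega
  · omega
  · subst ha'; rw [gfun_mid] at h; have := gfun_hi_gt τ hb' hb; omega
  · have := gfun_lo_lt τ hb'; have := gfun_hi_gt τ ha' ha; omega
  · subst hb'; rw [gfun_mid] at h; have := gfun_hi_gt τ ha' ha; omega
  · rw [gfun_hi τ ha', gfun_hi τ hb'] at h
    have h1 := natForm_lt τ (show 2 * s - a < s by omega)
    have h2 := natForm_lt τ (show 2 * s - b < s by omega)
    have : natForm τ (2 * s - a) = natForm τ (2 * s - b) := by omega
    have := natForm_inj τ (by omega) (by omega) this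
    omega

/-- The glued permutation of `Fin (2s+1)`. -/
noncomputable def glue (s : ℕ) (τ : Equiv.Perm (Fin s)) : Equiv.Perm (Fin (2 * s + 1)) :=
  Equiv.ofBijective (fun i => ⟨gfun s τ i.val, gfun_lt_n τ i.is_lt⟩)
    (Finite.injective_iff_bijective.mp
      (fun a b h => Fin.ext (gfun_inj τ a.is_lt b.is_lt (congrArg Fin.val h))))

lemma glue_val {s : ℕ} (τ : Equiv.Perm (Fin s)) (i : Fin (2 * s + 1)) :
    ((glue s τ) i).val = gfun s τ i.val := rfl

lemma natForm_glue {s : ℕ} (τ : Equiv.Perm (Fin s)) {i : ℕ} (h : i < 2 * s + 1) :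
    natForm (glue s τ) i = gfun s τ i := by
  rw [natForm_apply _ h]; rfl

lemma gfun_compl {s : ℕ} (τ : Equiv.Perm (Fin s)) {i : ℕ} (h : i < 2 * s + 1) :
    gfun s τ (2 * s - i) = 2 * s - gfun s τ i := by
  rcases lt_trichotomy i s with hi | hi | hi
  · rw [gfun_hi τ (show s < 2 * s - i by omega), gfun_lo τ hi]
    have h1 : 2 * s - (2 * s - i) = i := by omega
    rw [h1]
  · rw [hi, show 2 * s - s = s by omega, gfun_mid]
    omega
  · rw [gfun_lo τ (show 2 * s - i < s by omega), gfun_hi τ hi]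
    have := natForm_lt τ (show 2 * s - i < s by omega)
    omega

lemma rcPerm_glue {s : ℕ} (τ : Equiv.Perm (Fin s)) : rcPerm (glue s τ) = glue s τ := by
  ext i
  rw [rcPerm_apply]
  rw [Fin.val_rev, glue_val, glue_val, Fin.val_rev]
  have h1 : 2 * s + 1 - (i.val + 1) = 2 * s - i.val := by omega
  rw [h1, gfun_compl τ i.is_lt]
  have := gfun_lt_n τ i.is_lt
  omega

lemma avoids_glue {s : ℕ} {τ : Equiv.Perm (Fin s)} (hτ : Avoids321 τ) :
    Avoids321 (glue s τ) := by
  rintro ⟨i, j, k, hij, hjk, h1, h2⟩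
  rw [Fin.lt_def] at hij hjk h1 h2
  rw [glue_val, glue_val] at h1 h2
  have hKn : k.val < 2 * s + 1 := k.is_lt
  rcases lt_trichotomy i.val s with hi | hi | hi
  · have hgi : gfun s τ i.val < s := gfun_lo_lt τ hi
    have hJs : j.val < s := by
      rcases lt_trichotomy j.val s with h | h | h
      · exact h
      · exfalso; rw [h, gfun_mid] at h2; omega
      · exfalso; have := gfun_hi_gt τ h (by omega); omega
    have hKs : k.val < s := by
      rcases lt_trichotomy k.val s with h | h | h
      · exact h
      · exfalso; rw [h, gfun_mid] at h1
        have := gfun_lo_lt τ hJs; omega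
      · exfalso; have := gfun_hi_gt τ h (by omega)
        have := gfun_lo_lt τ hJs; omega
    rw [gfun_lo τ hi, gfun_lo τ hJs] at h2
    rw [gfun_lo τ hJs, gfun_lo τ hKs] at h1
    exact not_avoids_of_natForm hτ hij hjk hKs h1 h2
  · exfalso
    rw [hi, gfun_mid] at h2
    have := gfun_hi_gt τ (show s < j.val by omega) (by omega)
    omega
  · have hJ' : s < j.val := by omega
    have hK' : s < k.val := by omega
    rw [gfun_hi τ hi, gfun_hi τ hJ'] at h2
    rw [gfun_hi τ hJ', gfun_hi τ hK'] at h1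
    have b1 := natForm_lt τ (show 2 * s - i.val < s by omega)
    have b2 := natForm_lt τ (show 2 * s - j.val < s by omega)
    have b3 := natForm_lt τ (show 2 * s - k.val < s by omega)
    exact not_avoids_of_natForm hτ (show 2 * s - k.val < 2 * s - j.val by omega)
      (show 2 * s - j.val < 2 * s - i.val by omega) (show 2 * s - i.val < s by omega)
      (by omega) (by omega)

lemma avoids_unglue {s : ℕ} {τ : Equiv.Perm (Fin s)} (h : Avoids321 (glue s τ)) :
    Avoids321 τ := by
  rintro ⟨i, j, k, hij, hjk, h1, h2⟩
  rw [Fin.lt_def] at hij hjk h1 h2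
  apply not_avoids_of_natForm h (a := i.val) (b := j.val) (c := k.val) hij hjk
    (by omega)
  · rw [natForm_glue τ (by omega), natForm_glue τ (by omega),
      gfun_lo τ (by omega : k.val < s), gfun_lo τ (by omega : j.val < s),
      natForm_apply τ k.is_lt, natForm_apply τ j.is_lt]
    exact h1
  · rw [natForm_glue τ (by omega), natForm_glue τ (by omega),
      gfun_lo τ (by omega : j.val < s), gfun_lo τ (by omega : i.val < s),
      natForm_apply τ j.is_lt, natForm_apply τ i.is_lt]
    exact h2

lemma natDes_glue {s : ℕ} (τ : Equiv.Perm (Fin s)) :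
    natDes (glue s τ) = natDes τ ∪ (natDes τ).image (fun e => 2 * s - 1 - e) := by
  ext d
  rw [Finset.mem_union, Finset.mem_image]
  simp only [mem_natDes]
  constructor
  · rintro ⟨hd, hlt⟩
    rw [natForm_glue τ (by omega), natForm_glue τ (by omega)] at hlt
    have hcase : d + 1 < s ∨ d + 1 = s ∨ d = s ∨ (s < d ∧ d < 2 * s) := by omega
    rcases hcase with h | h | h | ⟨h, h'⟩
    · left
      rw [gfun_lo τ h, gfun_lo τ (by omega)] at hlt
      exact ⟨h, hlt⟩
    · exfalso
      have := gfun_lo_lt τ (show d < s by omega)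
      rw [show gfun s τ (d + 1) = s from h ▸ gfun_mid τ] at hlt
      omega
    · exfalso
      subst h
      rw [gfun_mid] at hlt
      have := gfun_hi_gt τ (show d < d + 1 by omega) (by omega)
      omega
    · right
      rw [gfun_hi τ h, gfun_hi τ (by omega)] at hlt
      have b1 := natForm_lt τ (show 2 * s - d < s by omega)
      have b2 := natForm_lt τ (show 2 * s - (d + 1) < s by omega)
      refine ⟨2 * s - 1 - d, ⟨by omega, ?_⟩, by omega⟩
      have e1 : 2 * s - 1 - d + 1 = 2 * s - d := by omega
      have e2 : 2 * s - 1 - d = 2 * s - (d + 1) := by omega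
      rw [e1, e2]
      omega
  · rintro (⟨h1, h2⟩ | ⟨e, ⟨he1, he2⟩, rfl⟩)
    · refine ⟨by omega, ?_⟩
      rw [natForm_glue τ (by omega), natForm_glue τ (by omega),
        gfun_lo τ h1, gfun_lo τ (by omega)]
      exact h2
    · have hd1 : s < 2 * s - 1 - e := by omega
      refine ⟨by omega, ?_⟩
      rw [natForm_glue τ (by omega), natForm_glue τ (by omega),
        gfun_hi τ (show s < 2 * s - 1 - e + 1 by omega), gfun_hi τ hd1]
      have e1 : 2 * s - (2 * s - 1 - e + 1) = e := by omega
      have e2 : 2 * s - (2 * s - 1 - e) = e + 1 := by omega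
      rw [e1, e2]
      have b1 := natForm_lt τ (show e < s by omega)
      have b2 := natForm_lt τ (show e + 1 < s from he1)
      omega

lemma desPerm_glue {s : ℕ} (τ : Equiv.Perm (Fin s)) :
    desPerm (glue s τ) = 2 * desPerm τ := by
  rw [desPerm_eq_natDes, desPerm_eq_natDes, natDes_glue]
  have hdisj : Disjoint (natDes τ) ((natDes τ).image (fun e => 2 * s - 1 - e)) := by
    rw [Finset.disjoint_left]
    intro a ha hb
    rw [Finset.mem_image] at hb
    obtain ⟨e, he, heq⟩ := hb
    have h1 := (mem_natDes τ a).mp ha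
    have h2 := (mem_natDes τ e).mp he
    omega
  rw [Finset.card_union_of_disjoint hdisj, Finset.card_image_of_injOn]
  · omega
  · intro a ha b hb h
    have h1 := (mem_natDes τ a).mp ha
    have h2 := (mem_natDes τ b).mp hb
    simp only at h
    omega

lemma glue_inj {s : ℕ} {τ τ' : Equiv.Perm (Fin s)} (h : glue s τ = glue s τ') : τ = τ' := by
  ext j
  have := congrArg (fun σ : Equiv.Perm (Fin (2 * s + 1)) => (σ ⟨j.val, by omega⟩).val) h
  simp only [glue_val] at this
  rw [gfun_lo τ j.is_lt, gfun_lo τ' j.is_lt,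
    natForm_apply τ j.is_lt, natForm_apply τ' j.is_lt] at this
  exact this

/-- Restriction of a permutation preserving `{0,…,s-1}` inside `Fin (2s+1)`. -/
noncomputable def restrictPerm {s : ℕ} (σ : Equiv.Perm (Fin (2 * s + 1)))
    (hlo : ∀ (i : ℕ) (hi : i < s), (σ ⟨i, by omega⟩).val < s) : Equiv.Perm (Fin s) :=
  Equiv.ofBijective (fun j : Fin s => ⟨(σ ⟨j.val, by omega⟩).val, hlo j.val j.is_lt⟩)
    (Finite.injective_iff_bijective.mp (fun a b h => by
      have h1 := congrArg Fin.val h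
      simp only at h1
      have h2 := congrArg Fin.val (σ.injective (Fin.ext h1))
      simp only at h2
      exact Fin.ext h2))

lemma restrictPerm_val {s : ℕ} (σ : Equiv.Perm (Fin (2 * s + 1)))
    (hlo : ∀ (i : ℕ) (hi : i < s), (σ ⟨i, by omega⟩).val < s) (j : ℕ) (hj : j < s) :
    natForm (restrictPerm σ hlo) j = natForm σ j := by
  rw [natForm_apply _ hj, natForm_apply σ (show j < 2 * s + 1 by omega)]
  rfl

lemma exists_glue {s : ℕ} {σ : Equiv.Perm (Fin (2 * s + 1))} (hav : Avoids321 σ)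
    (hrc : rcPerm σ = σ) : ∃ τ, σ = glue s τ := by
  have key : ∀ (a : ℕ), a < 2 * s + 1 → natForm σ a = 2 * s - natForm σ (2 * s - a) := by
    intro a ha
    rw [natForm_apply σ ha, natForm_apply σ (show 2 * s - a < 2 * s + 1 by omega)]
    have h0 := congrArg Fin.val (Equiv.ext_iff.mp hrc ⟨a, ha⟩)
    have h1 : (rcPerm σ ⟨a, ha⟩).val
        = 2 * s + 1 - ((σ (Fin.rev ⟨a, ha⟩)).val + 1) := by
      rw [rcPerm_apply, Fin.val_rev]
    have e : Fin.rev (⟨a, ha⟩ : Fin (2 * s + 1)) = ⟨2 * s - a, by omega⟩ := by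
      apply Fin.ext
      rw [Fin.val_rev]
      show 2 * s + 1 - (a + 1) = 2 * s - a
      omega
    have h2 := congrArg (fun x => (σ x).val) e
    have hb := (σ ⟨2 * s - a, by omega⟩).is_lt
    omega
  have hmid : natForm σ s = s := by
    have h := key s (by omega)
    have e : 2 * s - s = s := by omega
    rw [e] at h
    have hb := natForm_lt σ (show s < 2 * s + 1 by omega)
    omega
  have hloN : ∀ (a : ℕ), a < s → natForm σ a < s := by
    intro a ha
    by_contra hge
    push_neg at hge
    rcases eq_or_lt_of_le hge with heq | hgt
    · have : a = s := natForm_inj σ (by omega) (by omega) (by omega)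
      omega
    · have h := key a (by omega)
      have hb1 := natForm_lt σ (show a < 2 * s + 1 by omega)
      have hb2 := natForm_lt σ (show 2 * s - a < 2 * s + 1 by omega)
      exact not_avoids_of_natForm hav (a := a) (b := s) (c := 2 * s - a) ha
        (by omega) (by omega) (by omega) (by omega)
  have hlo : ∀ (i : ℕ) (hi : i < s), (σ ⟨i, by omega⟩).val < s := by
    intro i hi
    have h := hloN i hi
    rwa [natForm_apply σ (show i < 2 * s + 1 by omega)] at h
  refine ⟨restrictPerm σ hlo, ?_⟩
  ext i
  rw [glue_val]
  rcases lt_trichotomy i.val s with hi | hi | hi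
  · rw [gfun_lo _ hi, restrictPerm_val σ hlo i.val hi]
    exact (natForm_apply σ i.is_lt).symm
  · have e1 : natForm σ i.val = (σ i).val := natForm_apply σ i.is_lt
    rw [hi] at e1
    rw [hi, gfun_mid]
    omega
  · rw [gfun_hi _ hi, restrictPerm_val σ hlo (2 * s - i.val) (by omega)]
    have e1 : natForm σ i.val = (σ i).val := natForm_apply σ i.is_lt
    have h := key i.val i.is_lt
    omega

/-! ### Counting fixed points -/

lemma fixed_card (s k : ℕ) :
    ((Av (2 * s + 1)).filter (fun σ => desPerm σ = k ∧ rcPerm σ = σ)).card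
      = if k % 2 = 0 then ((Av s).filter (fun τ => desPerm τ = k / 2)).card else 0 := by
  split_ifs with hpar
  · have hset : (Av (2 * s + 1)).filter (fun σ => desPerm σ = k ∧ rcPerm σ = σ)
        = ((Av s).filter (fun τ => desPerm τ = k / 2)).image (glue s) := by
      ext σ
      rw [Finset.mem_filter, Finset.mem_image]
      constructor
      · rintro ⟨hAv, hdes, hrc⟩
        obtain ⟨τ, rfl⟩ := exists_glue (mem_Av.mp hAv) hrc
        refine ⟨τ, Finset.mem_filter.mpr ⟨mem_Av.mpr (avoids_unglue (mem_Av.mp hAv)), ?_⟩, rfl⟩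
        rw [desPerm_glue] at hdes
        omega
      · rintro ⟨τ, hτ, rfl⟩
        rw [Finset.mem_filter] at hτ
        obtain ⟨hAv, hdes⟩ := hτ
        refine ⟨mem_Av.mpr (avoids_glue (mem_Av.mp hAv)), ?_, rcPerm_glue τ⟩
        rw [desPerm_glue, hdes]
        omega
    rw [hset, Finset.card_image_of_injOn (fun a _ b _ h => glue_inj h)]
  · rw [Finset.card_eq_zero, Finset.eq_empty_iff_forall_notMem]
    intro σ hσ
    rw [Finset.mem_filter] at hσ
    obtain ⟨hAv, hdes, hrc⟩ := hσ
    obtain ⟨τ, rfl⟩ := exists_glue (mem_Av.mp hAv) hrc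
    rw [desPerm_glue] at hdes
    omega

lemma even_step (s : ℕ)
    (IH : ∀ k, 1 ≤ k → Even (((Av s).filter (fun τ => desPerm τ = k)).card))
    (k : ℕ) (hk : 1 ≤ k) :
    Even (((Av (2 * s + 1)).filter (fun σ => desPerm σ = k)).card) := by
  classical
  have hpar := invol_parity rcPerm ((Av (2 * s + 1)).filter (fun σ => desPerm σ = k))
    (by
      intro σ hσ
      rw [Finset.mem_filter] at hσ ⊢
      exact ⟨mem_Av.mpr (avoids_rcPerm (mem_Av.mp hσ.1)), (desPerm_rcPerm σ).trans hσ.2⟩)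
    (fun σ _ => rcPerm_rcPerm σ)
  rw [Finset.filter_filter] at hpar
  rw [Nat.even_iff, hpar, fixed_card s k]
  split_ifs with hpar2
  · have hk2 : 1 ≤ k / 2 := by omega
    have := IH (k / 2) hk2
    rw [Nat.even_iff] at this
    exact this
  · rfl

lemma zero_case (k : ℕ) (hk : 1 ≤ k) :
    Even (((Av 0).filter (fun σ => desPerm σ = k)).card) := by
  have h : (Av 0).filter (fun σ : Equiv.Perm (Fin 0) => desPerm σ = k) = ∅ := by
    rw [Finset.eq_empty_iff_forall_notMem]
    intro σ hσ
    rw [Finset.mem_filter] at hσ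
    have h1 : desPerm σ ≤ 0 := by
      have := Finset.card_le_univ (DesPerm σ)
      simpa [desPerm] using this
    omega
  rw [h]
  exact Even.zero

lemma even_all (m : ℕ) :
    ∀ k, 1 ≤ k → Even (((Av (2 ^ m - 1)).filter (fun σ => desPerm σ = k)).card) := by
  induction m with
  | zero => exact zero_case
  | succ m ih =>
    intro k hk
    have h2 : 0 < 2 ^ m := Nat.pow_pos (by norm_num)
    have hne : 2 ^ (m + 1) - 1 = 2 * (2 ^ m - 1) + 1 := by
      rw [pow_succ]
      omega
    rw [hne]
    exact even_step (2 ^ m - 1) ih k hk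

end Stmt13

/-- if `n = 2^m - 1` then the number of 321-avoiding permutations of `[n]`
with 0 descents is 1, and for each `k ≥ 1` the number with exactly `k` descents is even. -/
theorem stmt13 (m n : ℕ) (hn : n = 2 ^ m - 1) :
    ((Av n).filter (fun σ => desPerm σ = 0)).card = 1 ∧
      ∀ k, 1 ≤ k → Even (((Av n).filter (fun σ => desPerm σ = k)).card) := by
  subst hn
  exact ⟨Stmt13.card_des_zero _, Stmt13.even_all m⟩
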